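/- In the pair graph C(C_m) with m ≥ 4, partition the vertices into the sets L_q = {{j, m−(q−j)} : 1 ≤ j ≤ q}, q = 1,…,m. Then (1) L_i is linked to L_{i+1} for 1 ≤ i ≤ m−1, (2) L_i is linked to L_{m−i+1} for 1 ≤ i ≤ m−1, and (3) no other pairs L_i, L_j are linked; where A and B are linked if some edge of C(C_m) has one endpoint in A and one in B. -/

import Mathlib

/-- The independence number of a graph: the supremum of sizes of independent sets. -/
noncomputable def indepNum {V : Type*} (G : SimpleGraph V) : ℕ :=
  sSup {n | ∃ s : Finset V, s.card = n ∧ ∀ a ∈ s, ∀ b ∈ s, ¬ G.Adj a b}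

/-- The path graph on `n` vertices `0, 1, ..., n-1`. -/
def pathG (n : ℕ) : SimpleGraph (Fin n) :=
  SimpleGraph.fromRel (fun i j => (i : ℕ) + 1 = (j : ℕ))

/-- The cycle graph on `n` vertices `0, 1, ..., n-1`. -/
def cycleG (n : ℕ) : SimpleGraph (Fin n) :=
  SimpleGraph.fromRel (fun i j => (i : ℕ) + 1 = (j : ℕ) ∨ ((i : ℕ) = 0 ∧ (j : ℕ) = n - 1))

/-- The join of a graph `G` with a single extra vertex. -/
def joinK1 {V : Type*} (G : SimpleGraph V) : SimpleGraph (V ⊕ Unit) :=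
  SimpleGraph.fromRel (fun a b =>
    (∃ x y, G.Adj x y ∧ a = Sum.inl x ∧ b = Sum.inl y) ∨ (a.isLeft ∧ b.isRight))

/-- The fan graph `F_{m,1} = P_m + K_1`. -/
def fanG (m : ℕ) : SimpleGraph (Fin m ⊕ Unit) := joinK1 (pathG m)

/-- The wheel graph `W_{m,1} = C_m + K_1`. -/
def wheelG (m : ℕ) : SimpleGraph (Fin m ⊕ Unit) := joinK1 (cycleG m)

/-- The `k`-token graph: vertices are `k`-subsets of `V(G)`, two subsets adjacent
whenever their symmetric difference is an edge of `G`. -/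
def tokenGraph {V : Type*} [DecidableEq V] (k : ℕ) (G : SimpleGraph V) :
    SimpleGraph {A : Finset V // A.card = k} :=
  SimpleGraph.fromRel (fun A B => ∃ a b : V, G.Adj a b ∧ symmDiff A.1 B.1 = {a, b})

/-- The double vertex graph `G^(2)`: the `2`-token graph of `G`. -/
def doubleVertexGraph {V : Type*} [DecidableEq V] (G : SimpleGraph V) :
    SimpleGraph {A : Finset V // A.card = 2} :=
  tokenGraph 2 G

/-- The pair graph (complete double vertex graph) `C(G)`: vertices are the 2-multisets
of `V(G)`; `{a,x}` and `{a,y}` (distinct) are adjacent iff `x` and `y` are adjacent in `G`. -/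
def pairGraph {V : Type*} (G : SimpleGraph V) : SimpleGraph (Sym2 V) :=
  SimpleGraph.fromRel (fun s t => ∃ a x y : V, G.Adj x y ∧ s = Sym2.mk a x ∧ t = Sym2.mk a y)

/-- The set `L_q = {{j, m−(q−j)} : 1 ≤ j ≤ q}` of 2-multisets of the vertices of `C_m`,
written with 0-indexed vertices: `L_q = {{t, m−q+t} : 0 ≤ t < q}`. -/
def Lset (m q : ℕ) : Set (Sym2 (Fin m)) :=
  {s | ∃ t, t < q ∧ ∃ (h1 : t < m) (h2 : m - q + t < m),
    s = Sym2.mk ⟨t, h1⟩ ⟨m - q + t, h2⟩}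
/-- `A` and `B` are linked in `G` if some edge of `G` joins a vertex of `A` to one of `B`. -/
def Linked {V : Type*} (G : SimpleGraph V) (A B : Set V) : Prop :=
  ∃ a ∈ A, ∃ b ∈ B, G.Adj a b

lemma key (m i j p r a x y : ℕ) (hm : 4 ≤ m) (him : i ≤ m) (hjm : j ≤ m)
    (hp : p < i) (hr : r < j)
    (hs : (p = a ∧ m - i + p = x) ∨ (p = x ∧ m - i + p = a))
    (ht : (r = a ∧ m - j + r = y) ∨ (r = y ∧ m - j + r = a))
    (hxy : x + 1 = y ∨ x = 0 ∧ y = m - 1 ∨ (y + 1 = x ∨ y = 0 ∧ x = m - 1)) :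
    j = i + 1 ∨ i = j + 1 ∨ i + j = m + 1 := by omega


/-- In `C(C_m)` with `m ≥ 4`: (1) `L_i` is linked to `L_{i+1}` for `1 ≤ i ≤ m−1`,
(2) `L_i` is linked to `L_{m−i+1}` for `1 ≤ i ≤ m−1`, and (3) these are the only links
between distinct sets `L_i`, `L_j`. -/
theorem Lset_links (m : ℕ) (hm : 4 ≤ m) :
    (∀ i, 1 ≤ i → i ≤ m - 1 →
      Linked (pairGraph (cycleG m)) (Lset m i) (Lset m (i + 1))) ∧
    (∀ i, 1 ≤ i → i ≤ m - 1 →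
      Linked (pairGraph (cycleG m)) (Lset m i) (Lset m (m - i + 1))) ∧
    (∀ i j, 1 ≤ i → i ≤ m → 1 ≤ j → j ≤ m → i ≠ j →
      Linked (pairGraph (cycleG m)) (Lset m i) (Lset m j) →
      j = i + 1 ∨ i = j + 1 ∨ i + j = m + 1) := by
  refine ⟨?_, ?_, ?_⟩
  · -- part 1
    intro i hi1 hi2
    refine ⟨Sym2.mk ⟨0, by omega⟩ ⟨m - i + 0, by omega⟩,
      ⟨0, by omega, by omega, by omega, rfl⟩,
      Sym2.mk ⟨0, by omega⟩ ⟨m - (i+1) + 0, by omega⟩,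
      ⟨0, by omega, by omega, by omega, rfl⟩, ?_⟩
    rw [pairGraph, SimpleGraph.fromRel_adj]
    refine ⟨?_, Or.inl ⟨⟨0, by omega⟩, ⟨m - i + 0, by omega⟩, ⟨m - (i+1) + 0, by omega⟩,
      ?_, rfl, rfl⟩⟩
    · simp only [ne_eq, Sym2.eq_iff, Fin.mk.injEq]
      omega
    · rw [cycleG, SimpleGraph.fromRel_adj]
      refine ⟨?_, Or.inr (Or.inl ?_)⟩
      · simp only [ne_eq, Fin.mk.injEq]; omega
      · show m - (i+1) + 0 + 1 = m - i + 0; omega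
  · -- part 2
    intro i hi1 hi2
    refine ⟨Sym2.mk ⟨i - 1, by omega⟩ ⟨m - i + (i - 1), by omega⟩,
      ⟨i - 1, by omega, by omega, by omega, rfl⟩,
      Sym2.mk ⟨0, by omega⟩ ⟨m - (m - i + 1) + 0, by omega⟩,
      ⟨0, by omega, by omega, by omega, rfl⟩, ?_⟩
    rw [pairGraph, SimpleGraph.fromRel_adj]
    refine ⟨?_, Or.inl ⟨⟨i - 1, by omega⟩, ⟨m - i + (i - 1), by omega⟩, ⟨0, by omega⟩,
      ?_, rfl, ?_⟩⟩
    · simp only [ne_eq, Sym2.eq_iff, Fin.mk.injEq]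
      omega
    · rw [cycleG, SimpleGraph.fromRel_adj]
      refine ⟨?_, Or.inr (Or.inr ⟨?_, ?_⟩)⟩
      · simp only [ne_eq, Fin.mk.injEq]; omega
      · show (0:ℕ) = 0; rfl
      · show m - i + (i - 1) = m - 1; omega
    · rw [Sym2.eq_iff]
      exact Or.inr ⟨rfl, by rw [Fin.mk.injEq]; omega⟩
  · -- part 3
    intro i j hi1 hi2 hj1 hj2 hij ⟨s, hs, t, ht, hadj⟩
    obtain ⟨p, hp, hp1, hp2, rfl⟩ := hs
    obtain ⟨r, hr, hr1, hr2, rfl⟩ := ht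
    rw [pairGraph, SimpleGraph.fromRel_adj] at hadj
    obtain ⟨-, h | h⟩ := hadj <;>
      obtain ⟨a, x, y, hxy, hs', ht'⟩ := h <;>
      rw [cycleG, SimpleGraph.fromRel_adj] at hxy <;>
      obtain ⟨-, hxy⟩ := hxy <;>
      simp only [Sym2.eq_iff, Fin.ext_iff, Fin.val_mk] at hs' ht'
    · exact key m i j p r a.val x.val y.val hm hi2 hj2 hp hr hs' ht' (by omega)
    · exact key m i j p r a.val y.val x.val hm hi2 hj2 hp hr ht' hs' (by omega)
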